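/- Let k be an algebraically closed field and let p₁, …, p₆ ∈ k⁴ be nonzero vectors such that any four of them are linearly independent (i.e. the corresponding six points of ℙ³(k) are in general position). Then there exists an invertible linear map g ∈ GL₄(k) such that each pᵢ lies on the twisted cubic g·C₀: that is, for each i ∈ {1, …, 6} there are a pair (sᵢ, tᵢ) ∈ k² ∖ {(0,0)} and a nonzero scalar λᵢ ∈ k with g(sᵢ³, sᵢ²tᵢ, sᵢtᵢ², tᵢ³) = λᵢ · pᵢ. (Through any six points of ℙ³ in general position one can pass a twisted cubic curve.) -/

import Mathlib

theorem aux_MV {k : Type*} [CommRing k] (a0 a1 a2 a3 : k) :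
    (!![-(a1*a2*a3), a1*a2 + a1*a3 + a2*a3, -(a1+a2+a3), 1;
       -(a0*a2*a3), a0*a2 + a0*a3 + a2*a3, -(a0+a2+a3), 1;
       -(a0*a1*a3), a0*a1 + a0*a3 + a1*a3, -(a0+a1+a3), 1;
       -(a0*a1*a2), a0*a1 + a0*a2 + a1*a2, -(a0+a1+a2), 1] : Matrix (Fin 4) (Fin 4) k) *
    !![1, 1, 1, 1; a0, a1, a2, a3; a0^2, a1^2, a2^2, a3^2; a0^3, a1^3, a2^3, a3^3]
    = Matrix.diagonal ![(a0-a1)*(a0-a2)*(a0-a3), (a1-a0)*(a1-a2)*(a1-a3),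
        (a2-a0)*(a2-a1)*(a2-a3), (a3-a0)*(a3-a1)*(a3-a2)] := by
  ext i j
  fin_cases i <;> fin_cases j <;>
    simp [Matrix.mul_apply, Fin.sum_univ_four, Matrix.diagonal] <;> ring

set_option maxHeartbeats 2000000 in
open Matrix in
/-- Through any six points of `ℙ³` in general position over an algebraically
closed field one can pass a twisted cubic curve. -/
theorem twisted_cubic_through_six_points {k : Type*} [Field k] [IsAlgClosed k]
    (p : Fin 6 → Fin 4 → k) (hp : ∀ i, p i ≠ 0)
    (hgen : ∀ e : Fin 4 → Fin 6, Function.Injective e →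
      LinearIndependent k (p ∘ e)) :
    ∃ g : GL (Fin 4) k, ∀ i, ∃ s t : k, (s, t) ≠ (0, 0) ∧ ∃ c : k, c ≠ 0 ∧
      (g : Matrix (Fin 4) (Fin 4) k).mulVec ![s ^ 3, s ^ 2 * t, s * t ^ 2, t ^ 3]
        = c • p i := by
  classical
  set Q : Matrix (Fin 4) (Fin 4) k :=
    Matrix.of fun r j => p ((![0,1,2,3] : Fin 4 → Fin 6) j) r with hQdef
  have hQ : IsUnit Q := by
    rw [← Matrix.linearIndependent_cols_iff_isUnit]
    exact hgen ![0,1,2,3] (by decide)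
  have hQd : IsUnit Q.det := (Matrix.isUnit_iff_isUnit_det Q).mp hQ
  set c : Fin 4 → k := Q⁻¹ *ᵥ p 4 with hcdef
  set w : Fin 4 → k := Q⁻¹ *ᵥ p 5 with hwdef
  have hq4 : Q *ᵥ c = p 4 := by
    rw [hcdef, Matrix.mulVec_mulVec, Q.mul_nonsing_inv hQd, Matrix.one_mulVec]
  have hq5 : Q *ᵥ w = p 5 := by
    rw [hwdef, Matrix.mulVec_mulVec, Q.mul_nonsing_inv hQd, Matrix.one_mulVec]
  have hp4 : ∀ r, c 0 * p 0 r + c 1 * p 1 r + c 2 * p 2 r + c 3 * p 3 r = p 4 r := by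
    intro r
    simpa [Matrix.mulVec, dotProduct, Fin.sum_univ_four, mul_comm, hQdef]
      using congrFun hq4 r
  have hp5 : ∀ r, w 0 * p 0 r + w 1 * p 1 r + w 2 * p 2 r + w 3 * p 3 r = p 5 r := by
    intro r
    simpa [Matrix.mulVec, dotProduct, Fin.sum_univ_four, mul_comm, hQdef]
      using congrFun hq5 r
  -- nonvanishing of the coordinates of p 4
  have hc0 : c 0 ≠ 0 := by
    intro h0
    have := Fintype.linearIndependent_iff.mp (hgen ![1,2,3,4] (by decide))
      ![c 1, c 2, c 3, -1] ?_ 3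
    · norm_num [Matrix.cons_val_three, Matrix.tail_cons, Matrix.head_cons] at this
    · rw [Fin.sum_univ_four]; funext r
      simp only [Matrix.cons_val_zero, Matrix.cons_val_one, Matrix.head_cons,
        Function.comp_apply, Pi.add_apply, Pi.smul_apply, smul_eq_mul, Pi.zero_apply,
        Matrix.cons_val_two, Matrix.cons_val_three, Matrix.tail_cons, Matrix.head_fin_const]
      linear_combination hp4 r - p 0 r * h0
  have hc1 : c 1 ≠ 0 := by
    intro h0
    have := Fintype.linearIndependent_iff.mp (hgen ![0,2,3,4] (by decide))
      ![c 0, c 2, c 3, -1] ?_ 3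
    · norm_num [Matrix.cons_val_three, Matrix.tail_cons, Matrix.head_cons] at this
    · rw [Fin.sum_univ_four]; funext r
      simp only [Matrix.cons_val_zero, Matrix.cons_val_one, Matrix.head_cons,
        Function.comp_apply, Pi.add_apply, Pi.smul_apply, smul_eq_mul, Pi.zero_apply,
        Matrix.cons_val_two, Matrix.cons_val_three, Matrix.tail_cons, Matrix.head_fin_const]
      linear_combination hp4 r - p 1 r * h0
  have hc2 : c 2 ≠ 0 := by
    intro h0
    have := Fintype.linearIndependent_iff.mp (hgen ![0,1,3,4] (by decide))
      ![c 0, c 1, c 3, -1] ?_ 3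
    · norm_num [Matrix.cons_val_three, Matrix.tail_cons, Matrix.head_cons] at this
    · rw [Fin.sum_univ_four]; funext r
      simp only [Matrix.cons_val_zero, Matrix.cons_val_one, Matrix.head_cons,
        Function.comp_apply, Pi.add_apply, Pi.smul_apply, smul_eq_mul, Pi.zero_apply,
        Matrix.cons_val_two, Matrix.cons_val_three, Matrix.tail_cons, Matrix.head_fin_const]
      linear_combination hp4 r - p 2 r * h0
  have hc3 : c 3 ≠ 0 := by
    intro h0
    have := Fintype.linearIndependent_iff.mp (hgen ![0,1,2,4] (by decide))
      ![c 0, c 1, c 2, -1] ?_ 3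
    · norm_num [Matrix.cons_val_three, Matrix.tail_cons, Matrix.head_cons] at this
    · rw [Fin.sum_univ_four]; funext r
      simp only [Matrix.cons_val_zero, Matrix.cons_val_one, Matrix.head_cons,
        Function.comp_apply, Pi.add_apply, Pi.smul_apply, smul_eq_mul, Pi.zero_apply,
        Matrix.cons_val_two, Matrix.cons_val_three, Matrix.tail_cons, Matrix.head_fin_const]
      linear_combination hp4 r - p 3 r * h0
  -- nonvanishing of the coordinates of p 5
  have hw0 : w 0 ≠ 0 := by
    intro h0
    have := Fintype.linearIndependent_iff.mp (hgen ![1,2,3,5] (by decide))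
      ![w 1, w 2, w 3, -1] ?_ 3
    · norm_num [Matrix.cons_val_three, Matrix.tail_cons, Matrix.head_cons] at this
    · rw [Fin.sum_univ_four]; funext r
      simp only [Matrix.cons_val_zero, Matrix.cons_val_one, Matrix.head_cons,
        Function.comp_apply, Pi.add_apply, Pi.smul_apply, smul_eq_mul, Pi.zero_apply,
        Matrix.cons_val_two, Matrix.cons_val_three, Matrix.tail_cons, Matrix.head_fin_const]
      linear_combination hp5 r - p 0 r * h0
  have hw1 : w 1 ≠ 0 := by
    intro h0
    have := Fintype.linearIndependent_iff.mp (hgen ![0,2,3,5] (by decide))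
      ![w 0, w 2, w 3, -1] ?_ 3
    · norm_num [Matrix.cons_val_three, Matrix.tail_cons, Matrix.head_cons] at this
    · rw [Fin.sum_univ_four]; funext r
      simp only [Matrix.cons_val_zero, Matrix.cons_val_one, Matrix.head_cons,
        Function.comp_apply, Pi.add_apply, Pi.smul_apply, smul_eq_mul, Pi.zero_apply,
        Matrix.cons_val_two, Matrix.cons_val_three, Matrix.tail_cons, Matrix.head_fin_const]
      linear_combination hp5 r - p 1 r * h0
  have hw2 : w 2 ≠ 0 := by
    intro h0
    have := Fintype.linearIndependent_iff.mp (hgen ![0,1,3,5] (by decide))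
      ![w 0, w 1, w 3, -1] ?_ 3
    · norm_num [Matrix.cons_val_three, Matrix.tail_cons, Matrix.head_cons] at this
    · rw [Fin.sum_univ_four]; funext r
      simp only [Matrix.cons_val_zero, Matrix.cons_val_one, Matrix.head_cons,
        Function.comp_apply, Pi.add_apply, Pi.smul_apply, smul_eq_mul, Pi.zero_apply,
        Matrix.cons_val_two, Matrix.cons_val_three, Matrix.tail_cons, Matrix.head_fin_const]
      linear_combination hp5 r - p 2 r * h0
  have hw3 : w 3 ≠ 0 := by
    intro h0
    have := Fintype.linearIndependent_iff.mp (hgen ![0,1,2,5] (by decide))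
      ![w 0, w 1, w 2, -1] ?_ 3
    · norm_num [Matrix.cons_val_three, Matrix.tail_cons, Matrix.head_cons] at this
    · rw [Fin.sum_univ_four]; funext r
      simp only [Matrix.cons_val_zero, Matrix.cons_val_one, Matrix.head_cons,
        Function.comp_apply, Pi.add_apply, Pi.smul_apply, smul_eq_mul, Pi.zero_apply,
        Matrix.cons_val_two, Matrix.cons_val_three, Matrix.tail_cons, Matrix.head_fin_const]
      linear_combination hp5 r - p 3 r * h0
  -- pairwise cross conditions
  have h01 : c 0 * w 1 ≠ c 1 * w 0 := by
    intro h
    have := Fintype.linearIndependent_iff.mp (hgen ![2,3,4,5] (by decide))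
      ![-(w 0 * c 2 - c 0 * w 2), -(w 0 * c 3 - c 0 * w 3), w 0, -(c 0)] ?_ 2
    · exact hw0 this
    · rw [Fin.sum_univ_four]; funext r
      simp only [Matrix.cons_val_zero, Matrix.cons_val_one, Matrix.head_cons,
        Function.comp_apply, Pi.add_apply, Pi.smul_apply, smul_eq_mul, Pi.zero_apply,
        Matrix.cons_val_two, Matrix.cons_val_three, Matrix.tail_cons, Matrix.head_fin_const]
      linear_combination c 0 * hp5 r - w 0 * hp4 r - p 1 r * h
  have h02 : c 0 * w 2 ≠ c 2 * w 0 := by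
    intro h
    have := Fintype.linearIndependent_iff.mp (hgen ![1,3,4,5] (by decide))
      ![-(w 0 * c 1 - c 0 * w 1), -(w 0 * c 3 - c 0 * w 3), w 0, -(c 0)] ?_ 2
    · exact hw0 this
    · rw [Fin.sum_univ_four]; funext r
      simp only [Matrix.cons_val_zero, Matrix.cons_val_one, Matrix.head_cons,
        Function.comp_apply, Pi.add_apply, Pi.smul_apply, smul_eq_mul, Pi.zero_apply,
        Matrix.cons_val_two, Matrix.cons_val_three, Matrix.tail_cons, Matrix.head_fin_const]
      linear_combination c 0 * hp5 r - w 0 * hp4 r - p 2 r * h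
  have h03 : c 0 * w 3 ≠ c 3 * w 0 := by
    intro h
    have := Fintype.linearIndependent_iff.mp (hgen ![1,2,4,5] (by decide))
      ![-(w 0 * c 1 - c 0 * w 1), -(w 0 * c 2 - c 0 * w 2), w 0, -(c 0)] ?_ 2
    · exact hw0 this
    · rw [Fin.sum_univ_four]; funext r
      simp only [Matrix.cons_val_zero, Matrix.cons_val_one, Matrix.head_cons,
        Function.comp_apply, Pi.add_apply, Pi.smul_apply, smul_eq_mul, Pi.zero_apply,
        Matrix.cons_val_two, Matrix.cons_val_three, Matrix.tail_cons, Matrix.head_fin_const]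
      linear_combination c 0 * hp5 r - w 0 * hp4 r - p 3 r * h
  have h12 : c 1 * w 2 ≠ c 2 * w 1 := by
    intro h
    have := Fintype.linearIndependent_iff.mp (hgen ![0,3,4,5] (by decide))
      ![-(w 1 * c 0 - c 1 * w 0), -(w 1 * c 3 - c 1 * w 3), w 1, -(c 1)] ?_ 2
    · exact hw1 this
    · rw [Fin.sum_univ_four]; funext r
      simp only [Matrix.cons_val_zero, Matrix.cons_val_one, Matrix.head_cons,
        Function.comp_apply, Pi.add_apply, Pi.smul_apply, smul_eq_mul, Pi.zero_apply,
        Matrix.cons_val_two, Matrix.cons_val_three, Matrix.tail_cons, Matrix.head_fin_const]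
      linear_combination c 1 * hp5 r - w 1 * hp4 r - p 2 r * h
  have h13 : c 1 * w 3 ≠ c 3 * w 1 := by
    intro h
    have := Fintype.linearIndependent_iff.mp (hgen ![0,2,4,5] (by decide))
      ![-(w 1 * c 0 - c 1 * w 0), -(w 1 * c 2 - c 1 * w 2), w 1, -(c 1)] ?_ 2
    · exact hw1 this
    · rw [Fin.sum_univ_four]; funext r
      simp only [Matrix.cons_val_zero, Matrix.cons_val_one, Matrix.head_cons,
        Function.comp_apply, Pi.add_apply, Pi.smul_apply, smul_eq_mul, Pi.zero_apply,
        Matrix.cons_val_two, Matrix.cons_val_three, Matrix.tail_cons, Matrix.head_fin_const]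
      linear_combination c 1 * hp5 r - w 1 * hp4 r - p 3 r * h
  have h23 : c 2 * w 3 ≠ c 3 * w 2 := by
    intro h
    have := Fintype.linearIndependent_iff.mp (hgen ![0,1,4,5] (by decide))
      ![-(w 2 * c 0 - c 2 * w 0), -(w 2 * c 1 - c 2 * w 1), w 2, -(c 2)] ?_ 2
    · exact hw2 this
    · rw [Fin.sum_univ_four]; funext r
      simp only [Matrix.cons_val_zero, Matrix.cons_val_one, Matrix.head_cons,
        Function.comp_apply, Pi.add_apply, Pi.smul_apply, smul_eq_mul, Pi.zero_apply,
        Matrix.cons_val_two, Matrix.cons_val_three, Matrix.tail_cons, Matrix.head_fin_const]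
      linear_combination c 2 * hp5 r - w 2 * hp4 r - p 3 r * h
  -- the parameters
  set a : Fin 4 → k := fun i => -(c i / w i) with hadef
  have haij : ∀ i j : Fin 4, w i ≠ 0 → w j ≠ 0 → c i * w j ≠ c j * w i → a i ≠ a j := by
    intro i j hwi hwj hij h
    apply hij
    simp only [hadef, neg_inj, div_eq_div_iff hwi hwj] at h
    exact h
  have ha01 : a 0 ≠ a 1 := haij 0 1 hw0 hw1 h01
  have ha02 : a 0 ≠ a 2 := haij 0 2 hw0 hw2 h02
  have ha03 : a 0 ≠ a 3 := haij 0 3 hw0 hw3 h03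
  have ha12 : a 1 ≠ a 2 := haij 1 2 hw1 hw2 h12
  have ha13 : a 1 ≠ a 3 := haij 1 3 hw1 hw3 h13
  have ha23 : a 2 ≠ a 3 := haij 2 3 hw2 hw3 h23
  -- the coefficient matrix of the cubics
  set M : Matrix (Fin 4) (Fin 4) k :=
    !![-(a 1*a 2*a 3), a 1*a 2 + a 1*a 3 + a 2*a 3, -(a 1+a 2+a 3), 1;
       -(a 0*a 2*a 3), a 0*a 2 + a 0*a 3 + a 2*a 3, -(a 0+a 2+a 3), 1;
       -(a 0*a 1*a 3), a 0*a 1 + a 0*a 3 + a 1*a 3, -(a 0+a 1+a 3), 1;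
       -(a 0*a 1*a 2), a 0*a 1 + a 0*a 2 + a 1*a 2, -(a 0+a 1+a 2), 1] with hMdef
  have hMV := aux_MV (a 0) (a 1) (a 2) (a 3)
  rw [← hMdef] at hMV
  have hDetProd : M.det *
      (!![1, 1, 1, 1; a 0, a 1, a 2, a 3; (a 0)^2, (a 1)^2, (a 2)^2, (a 3)^2;
          (a 0)^3, (a 1)^3, (a 2)^3, (a 3)^3] : Matrix (Fin 4) (Fin 4) k).det
      = ((a 0-a 1)*(a 0-a 2)*(a 0-a 3)) * ((a 1-a 0)*(a 1-a 2)*(a 1-a 3)) *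
        ((a 2-a 0)*(a 2-a 1)*(a 2-a 3)) * ((a 3-a 0)*(a 3-a 1)*(a 3-a 2)) := by
    rw [← Matrix.det_mul, hMV, Matrix.det_diagonal, Fin.prod_univ_four]
    simp only [Matrix.cons_val_zero, Matrix.cons_val_one, Matrix.head_cons,
      Matrix.cons_val_two, Matrix.cons_val_three, Matrix.tail_cons, Matrix.head_fin_const]
  have hMdetne : M.det ≠ 0 := by
    refine left_ne_zero_of_mul (b := (!![1, 1, 1, 1; a 0, a 1, a 2, a 3;
      (a 0)^2, (a 1)^2, (a 2)^2, (a 3)^2;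
      (a 0)^3, (a 1)^3, (a 2)^3, (a 3)^3] : Matrix (Fin 4) (Fin 4) k).det) ?_
    rw [hDetProd]
    have e01 := sub_ne_zero.mpr ha01
    have e02 := sub_ne_zero.mpr ha02
    have e03 := sub_ne_zero.mpr ha03
    have e12 := sub_ne_zero.mpr ha12
    have e13 := sub_ne_zero.mpr ha13
    have e23 := sub_ne_zero.mpr ha23
    have e10 := sub_ne_zero.mpr (Ne.symm ha01)
    have e20 := sub_ne_zero.mpr (Ne.symm ha02)
    have e30 := sub_ne_zero.mpr (Ne.symm ha03)
    have e21 := sub_ne_zero.mpr (Ne.symm ha12)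
    have e31 := sub_ne_zero.mpr (Ne.symm ha13)
    have e32 := sub_ne_zero.mpr (Ne.symm ha23)
    exact mul_ne_zero (mul_ne_zero (mul_ne_zero
      (mul_ne_zero (mul_ne_zero e01 e02) e03)
      (mul_ne_zero (mul_ne_zero e10 e12) e13))
      (mul_ne_zero (mul_ne_zero e20 e21) e23))
      (mul_ne_zero (mul_ne_zero e30 e31) e32)
  set G : Matrix (Fin 4) (Fin 4) k := Q * (Matrix.diagonal c * M) with hGdef
  have hGdet : IsUnit G.det := by
    rw [hGdef, Matrix.det_mul, Matrix.det_mul, Matrix.det_diagonal, Fin.prod_univ_four]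
    exact hQd.mul (isUnit_iff_ne_zero.mpr (mul_ne_zero
      (mul_ne_zero (mul_ne_zero (mul_ne_zero hc0 hc1) hc2) hc3) hMdetne))
  have hGU : IsUnit G := (Matrix.isUnit_iff_isUnit_det G).mpr hGdet
  refine ⟨hGU.unit, ?_⟩
  have hGcoe : (hGU.unit : Matrix (Fin 4) (Fin 4) k) = G := hGU.unit_spec
  have hd0 : (a 0 - a 1)*(a 0 - a 2)*(a 0 - a 3) ≠ 0 :=
    mul_ne_zero (mul_ne_zero (sub_ne_zero.mpr ha01) (sub_ne_zero.mpr ha02)) (sub_ne_zero.mpr ha03)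
  have hd1 : (a 1 - a 0)*(a 1 - a 2)*(a 1 - a 3) ≠ 0 :=
    mul_ne_zero (mul_ne_zero (sub_ne_zero.mpr (Ne.symm ha01)) (sub_ne_zero.mpr ha12)) (sub_ne_zero.mpr ha13)
  have hd2 : (a 2 - a 0)*(a 2 - a 1)*(a 2 - a 3) ≠ 0 :=
    mul_ne_zero (mul_ne_zero (sub_ne_zero.mpr (Ne.symm ha02)) (sub_ne_zero.mpr (Ne.symm ha12))) (sub_ne_zero.mpr ha23)
  have hd3 : (a 3 - a 0)*(a 3 - a 1)*(a 3 - a 2) ≠ 0 :=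
    mul_ne_zero (mul_ne_zero (sub_ne_zero.mpr (Ne.symm ha03)) (sub_ne_zero.mpr (Ne.symm ha13))) (sub_ne_zero.mpr (Ne.symm ha23))
  intro i
  have hGv : ∀ v : Fin 4 → k, G *ᵥ v = Q *ᵥ (Matrix.diagonal c *ᵥ (M *ᵥ v)) := by
    intro v
    rw [Matrix.mulVec_mulVec, Matrix.mulVec_mulVec, hGdef, Matrix.mul_assoc]
  fin_cases i
  · refine ⟨1, a 0, by simp, c 0 * ((a 0 - a 1)*(a 0 - a 2)*(a 0 - a 3)), mul_ne_zero hc0 hd0, ?_⟩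
    rw [hGcoe, hGv]
    have hstep : Matrix.diagonal c *ᵥ (M *ᵥ ![(1:k)^3, 1^2 * a 0, 1 * (a 0)^2, (a 0)^3])
        = ![c 0 * ((a 0 - a 1)*(a 0 - a 2)*(a 0 - a 3)), 0, 0, 0] := by
      funext r
      fin_cases r <;>
        simp [hMdef, Matrix.mulVec, dotProduct, Fin.sum_univ_four,
          -mul_eq_mul_left_iff, -mul_eq_zero] <;> ring
    rw [hstep]
    funext r
    simp [hQdef, Matrix.mulVec, dotProduct, Fin.sum_univ_four,
      -mul_eq_mul_left_iff, -mul_eq_zero] <;> ring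
  · refine ⟨1, a 1, by simp, c 1 * ((a 1 - a 0)*(a 1 - a 2)*(a 1 - a 3)), mul_ne_zero hc1 hd1, ?_⟩
    rw [hGcoe, hGv]
    have hstep : Matrix.diagonal c *ᵥ (M *ᵥ ![(1:k)^3, 1^2 * a 1, 1 * (a 1)^2, (a 1)^3])
        = ![0, c 1 * ((a 1 - a 0)*(a 1 - a 2)*(a 1 - a 3)), 0, 0] := by
      funext r
      fin_cases r <;>
        simp [hMdef, Matrix.mulVec, dotProduct, Fin.sum_univ_four,
          -mul_eq_mul_left_iff, -mul_eq_zero] <;> ring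
    rw [hstep]
    funext r
    simp [hQdef, Matrix.mulVec, dotProduct, Fin.sum_univ_four,
      -mul_eq_mul_left_iff, -mul_eq_zero] <;> ring
  · refine ⟨1, a 2, by simp, c 2 * ((a 2 - a 0)*(a 2 - a 1)*(a 2 - a 3)), mul_ne_zero hc2 hd2, ?_⟩
    rw [hGcoe, hGv]
    have hstep : Matrix.diagonal c *ᵥ (M *ᵥ ![(1:k)^3, 1^2 * a 2, 1 * (a 2)^2, (a 2)^3])
        = ![0, 0, c 2 * ((a 2 - a 0)*(a 2 - a 1)*(a 2 - a 3)), 0] := by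
      funext r
      fin_cases r <;>
        simp [hMdef, Matrix.mulVec, dotProduct, Fin.sum_univ_four,
          -mul_eq_mul_left_iff, -mul_eq_zero] <;> ring
    rw [hstep]
    funext r
    simp [hQdef, Matrix.mulVec, dotProduct, Fin.sum_univ_four,
      -mul_eq_mul_left_iff, -mul_eq_zero] <;> ring
  · refine ⟨1, a 3, by simp, c 3 * ((a 3 - a 0)*(a 3 - a 1)*(a 3 - a 2)), mul_ne_zero hc3 hd3, ?_⟩
    rw [hGcoe, hGv]
    have hstep : Matrix.diagonal c *ᵥ (M *ᵥ ![(1:k)^3, 1^2 * a 3, 1 * (a 3)^2, (a 3)^3])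
        = ![0, 0, 0, c 3 * ((a 3 - a 0)*(a 3 - a 1)*(a 3 - a 2))] := by
      funext r
      fin_cases r <;>
        simp [hMdef, Matrix.mulVec, dotProduct, Fin.sum_univ_four,
          -mul_eq_mul_left_iff, -mul_eq_zero] <;> ring
    rw [hstep]
    funext r
    simp [hQdef, Matrix.mulVec, dotProduct, Fin.sum_univ_four,
      -mul_eq_mul_left_iff, -mul_eq_zero] <;> ring
  · refine ⟨0, 1, by simp, 1, one_ne_zero, ?_⟩
    rw [hGcoe, hGv]
    have hstep : Matrix.diagonal c *ᵥ (M *ᵥ ![(0:k)^3, 0^2 * 1, 0 * 1^2, 1^3]) = c := by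
      funext r
      fin_cases r <;>
        simp [hMdef, Matrix.mulVec, dotProduct, Fin.sum_univ_four,
          -mul_eq_mul_left_iff, -mul_eq_zero]
    rw [hstep, hq4, one_smul]
    rfl
  · set A : k := (c 0 * c 1 * c 2 * c 3) / (w 0 * w 1 * w 2 * w 3) with hAdef
    have hA : A ≠ 0 := div_ne_zero
      (mul_ne_zero (mul_ne_zero (mul_ne_zero hc0 hc1) hc2) hc3)
      (mul_ne_zero (mul_ne_zero (mul_ne_zero hw0 hw1) hw2) hw3)
    refine ⟨1, 0, by simp, A, hA, ?_⟩
    rw [hGcoe, hGv]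
    have hstep : Matrix.diagonal c *ᵥ (M *ᵥ ![(1:k)^3, 1^2 * 0, 1 * 0^2, 0^3]) = A • w := by
      funext r
      fin_cases r <;>
      · simp [hMdef, hadef, hAdef, Matrix.mulVec, dotProduct, Fin.sum_univ_four,
          -mul_eq_mul_left_iff, -mul_eq_zero]
        field_simp
    rw [hstep, Matrix.mulVec_smul, hq5]
    rfl
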